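/- Let k, n ∈ ℕ with n ≥ 1, let ζ ∈ ℂ be a primitive n-th root of unity, and let ñ = n if n is odd and ñ = n/2 if n is even. Then the ℂ-dimension (Module.finrank) of the centralizer subalgebra {X : Matrix I_k I_k ℂ | X·D(k,ζ) = D(k,ζ)·X} equals Σ_{0 ≤ a ≤ k} Σ_{0 ≤ b ≤ k, a ≡ b (mod ñ)} C(k,a)·C(k,b), where C(k,a) denotes the binomial coefficient. -/

import Mathlib

open Matrix

/-- The number of `-1` factors (encoded as `true`) in a simple tensor index. -/
def wt {k : ℕ} (r : Fin k → Bool) : ℕ := (Finset.univ.filter fun i => r i = true).card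

/-- The matrix of `g^{⊗k}` on `V^{⊗k}` for `g = diag(ζ⁻¹, ζ)`. -/
noncomputable def Dmat (k : ℕ) (ζ : ℂ) : Matrix (Fin k → Bool) (Fin k → Bool) ℂ :=
  Matrix.diagonal fun r => ζ ^ ((k : ℤ) - 2 * (wt r : ℤ))

/-- `ñ = n` if `n` is odd, `n/2` if `n` is even. -/
def ntil (n : ℕ) : ℕ := if n % 2 = 0 then n / 2 else n

/-- The centralizer of a matrix `M`, as a submodule of the matrix algebra. -/
noncomputable def commSub {I : Type*} [Fintype I] [DecidableEq I] (M : Matrix I I ℂ) :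
    Submodule ℂ (Matrix I I ℂ) where
  carrier := {X | X * M = M * X}
  add_mem' := by
    intro a b ha hb
    simp only [Set.mem_setOf_eq] at *
    rw [add_mul, mul_add, ha, hb]
  zero_mem' := by simp
  smul_mem' := by
    intro c X hX
    simp only [Set.mem_setOf_eq] at *
    rw [smul_mul_assoc, mul_smul_comm, hX]

lemma ntil_dvd_iff (n : ℕ) (hn : 1 ≤ n) (c : ℤ) :
    (n : ℤ) ∣ 2 * c ↔ ((ntil n : ℕ) : ℤ) ∣ c := by
  rw [ntil]
  split_ifs with h
  · obtain ⟨m, rfl⟩ := (Nat.even_iff.mpr h)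
    have h2 : ((m + m) / 2 : ℕ) = m := by omega
    rw [h2]
    have h3 : ((m + m : ℕ) : ℤ) = 2 * m := by push_cast; ring
    rw [h3]
    exact mul_dvd_mul_iff_left (by norm_num : (2 : ℤ) ≠ 0)
  · have hco : IsCoprime (n : ℤ) 2 := by
      have h2 : ((2 : ℕ) : ℤ) = (2 : ℤ) := by norm_num
      rw [← h2, Nat.isCoprime_iff_coprime]
      exact Nat.coprime_two_right.mpr (Nat.odd_iff.mpr (by omega))
    exact ⟨fun hd => hco.dvd_of_dvd_mul_left hd, fun hd => Dvd.dvd.mul_left hd 2⟩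

lemma mem_commSub_diagonal {I : Type*} [Fintype I] [DecidableEq I] (d : I → ℂ)
    (X : Matrix I I ℂ) :
    X ∈ commSub (diagonal d) ↔ ∀ r s, d r ≠ d s → X r s = 0 := by
  have hmem : X ∈ commSub (diagonal d) ↔ X * diagonal d = diagonal d * X := Iff.rfl
  rw [hmem]
  constructor
  · intro h r s hds
    have h2 := congrFun (congrFun h r) s
    rw [Matrix.mul_diagonal, Matrix.diagonal_mul] at h2
    have h3 : (d r - d s) * X r s = 0 := by linear_combination -h2
    rcases mul_eq_zero.mp h3 with h4 | h4
    · exact absurd (sub_eq_zero.mp h4) hds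
    · exact h4
  · intro h
    ext r s
    rw [Matrix.mul_diagonal, Matrix.diagonal_mul]
    by_cases hds : d r = d s
    · rw [hds, mul_comm]
    · rw [h r s hds, mul_zero, zero_mul]

noncomputable def commSubEquiv {I : Type*} [Fintype I] [DecidableEq I] (d : I → ℂ) :
    commSub (diagonal d) ≃ₗ[ℂ] ({p : I × I // d p.1 = d p.2} → ℂ) where
  toFun X p := X.1 p.1.1 p.1.2
  map_add' X Y := rfl
  map_smul' c X := rfl
  invFun f := ⟨Matrix.of fun r s => if h : d r = d s then f ⟨(r, s), h⟩ else 0, by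
    rw [mem_commSub_diagonal]
    intro r s hds
    simp [hds]⟩
  left_inv X := by
    ext r s
    by_cases hds : d r = d s
    · simp [hds]
    · simp [hds, (mem_commSub_diagonal d X.1).mp X.2 r s hds]
  right_inv f := by
    ext p
    simp [p.2]

lemma finrank_commSub_diagonal {I : Type*} [Fintype I] [DecidableEq I] (d : I → ℂ) :
    Module.finrank ℂ (commSub (diagonal d)) =
      (Finset.univ.filter fun p : I × I => d p.1 = d p.2).card := by
  rw [(commSubEquiv d).finrank_eq, Module.finrank_pi, Fintype.card_subtype]

lemma card_wt (k a : ℕ) :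
    (Finset.univ.filter fun r : Fin k → Bool => wt r = a).card = k.choose a := by
  rw [← Fintype.card_subtype]
  have e : {r : Fin k → Bool // wt r = a} ≃ {s : Finset (Fin k) // s.card = a} :=
    { toFun := fun r => ⟨Finset.univ.filter fun i => r.1 i = true, r.2⟩
      invFun := fun s => ⟨fun i => decide (i ∈ s.1), by simp [wt, s.2]⟩
      left_inv := fun r => by
        ext i
        simp
      right_inv := fun s => by
        ext i
        simp }
  rw [Fintype.card_congr e, Fintype.card_finset_len, Fintype.card_fin]

lemma wt_le (k : ℕ) (r : Fin k → Bool) : wt r ≤ k := by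
  simpa [wt] using (Finset.card_filter_le Finset.univ fun i => r i = true).trans_eq (by simp)

lemma count_pairs (k m : ℕ) :
    (Finset.univ.filter fun p : (Fin k → Bool) × (Fin k → Bool) =>
        wt p.1 ≡ wt p.2 [MOD m]).card =
      ∑ a ∈ Finset.range (k + 1), ∑ b ∈ Finset.range (k + 1),
        if a ≡ b [MOD m] then k.choose a * k.choose b else 0 := by
  classical
  rw [Finset.card_filter]
  rw [← Finset.univ_product_univ, Finset.sum_product]
  have key : ∀ (G : ℕ → ℕ), (∑ r : Fin k → Bool, G (wt r)) =
      ∑ a ∈ Finset.range (k + 1), k.choose a * G a := by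
    intro G
    rw [Finset.sum_comp (fun a => G a) (fun r : Fin k → Bool => wt r)]
    rw [Finset.sum_subset (Finset.image_subset_iff.mpr
      (fun r _ => Finset.mem_range.mpr (Nat.lt_succ_of_le (wt_le k r))))
      (fun b _ hb => by
        have : (Finset.univ.filter fun r : Fin k → Bool => wt r = b) = ∅ := by
          rw [Finset.filter_eq_empty_iff]
          intro r _ hrb
          exact hb (hrb ▸ Finset.mem_image_of_mem wt (Finset.mem_univ r))
        rw [this]; simp)]
    refine Finset.sum_congr rfl fun a _ => ?_
    rw [card_wt, smul_eq_mul]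
  rw [key fun x => ∑ s : Fin k → Bool, if x ≡ wt s [MOD m] then 1 else 0]
  refine Finset.sum_congr rfl fun a _ => ?_
  rw [key fun x => if a ≡ x [MOD m] then 1 else 0]
  rw [Finset.mul_sum]
  refine Finset.sum_congr rfl fun b _ => ?_
  by_cases h : a ≡ b [MOD m] <;> simp [h, mul_comm]

lemma entry_iff (k n : ℕ) (hn : 1 ≤ n) (ζ : ℂ) (hζ : IsPrimitiveRoot ζ n)
    (a b : ℕ) :
    ζ ^ ((k : ℤ) - 2 * (a : ℤ)) = ζ ^ ((k : ℤ) - 2 * (b : ℤ)) ↔ a ≡ b [MOD ntil n] := by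
  have hz : ζ ≠ 0 := hζ.ne_zero (by omega)
  have hzp : ζ ^ ((k : ℤ) - 2 * (a : ℤ)) = ζ ^ ((k : ℤ) - 2 * (b : ℤ)) ↔
      ζ ^ (2 * ((b : ℤ) - (a : ℤ))) = 1 := by
    rw [show (2 * ((b : ℤ) - (a : ℤ))) = ((k : ℤ) - 2 * (a : ℤ)) - ((k : ℤ) - 2 * (b : ℤ)) by
      ring]
    conv_rhs => rw [zpow_sub₀ hz]
    exact (div_eq_one_iff_eq (zpow_ne_zero _ hz)).symm
  rw [hzp, hζ.zpow_eq_one_iff_dvd, ntil_dvd_iff n hn, ← Nat.modEq_iff_dvd]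

theorem stmt1 (k n : ℕ) (hn : 1 ≤ n) (ζ : ℂ) (hζ : IsPrimitiveRoot ζ n) :
    Module.finrank ℂ (commSub (Dmat k ζ)) =
      ∑ a ∈ Finset.range (k + 1), ∑ b ∈ Finset.range (k + 1),
        if a ≡ b [MOD ntil n] then k.choose a * k.choose b else 0 := by
  classical
  rw [Dmat, finrank_commSub_diagonal, ← count_pairs k (ntil n)]
  congr 1
  apply Finset.filter_congr
  intro p _
  rw [entry_iff k n hn ζ hζ]
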